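/- There exist a positive-integer-valued function q : ℕ → ℕ and a positive integer B such that: (i) the function n ↦ q(⌊log n⌋ + 1) is a super-polynomial (log denoting the natural logarithm), and (ii) for every positive integer n, the opposite-Ramsey number satisfies r((2n+1)², q(n)) ≤ B; that is, there exists a coloring of the 2-element subsets of a q(n)-element set with (2n+1)² colors admitting no set of B+1 vertices all of whose 2-element subsets receive the same color. In particular limsup_{n→∞} r((2n+1)², q(n)) < ∞. -/

import Mathlib

open Filter

/-- A function `f : ℕ → ℝ` is a super-polynomial if for every (nonzero) polynomial `g`
with real coefficients, `liminf_{n→∞} |f n| / |g n| = ∞`, i.e. the quotient tends to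
infinity. -/
def SuperPolynomial (f : ℕ → ℝ) : Prop :=
  ∀ g : Polynomial ℝ, g ≠ 0 →
    Tendsto (fun n : ℕ => |f n| / |g.eval (n : ℝ)|) atTop atTop

/-- A finite set of vertices is monochromatic for an edge-coloring `C` of the
2-element subsets if all its 2-element subsets receive the same color. -/
def IsMonochromatic {V C : Type*} (Col : Sym2 V → C) (s : Finset V) : Prop :=
  ∃ c : C, ∀ x ∈ s, ∀ y ∈ s, x ≠ y → Col s(x, y) = c

/-- The highest set bit of a nonzero number is set. -/
lemma testBit_log_self {d : ℕ} (hd : d ≠ 0) : d.testBit (Nat.log 2 d) = true := by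
  have h1 : 2 ^ (Nat.log 2 d) ≤ d := Nat.pow_log_le_self 2 hd
  have h2 : d < 2 ^ (Nat.log 2 d + 1) := Nat.lt_pow_succ_log_self one_lt_two d
  have hdiv : d / 2 ^ (Nat.log 2 d) = 1 := by
    apply Nat.div_eq_of_lt_le (by simpa using h1)
    rw [pow_succ] at h2; omega
  rw [Nat.testBit_eq_decide_div_mod_eq, hdiv]
  decide

/-- Two numbers differ at the highest bit of their xor. -/
lemma testBit_ne_of_ne {x y : ℕ} (h : x ≠ y) :
    x.testBit (Nat.log 2 (x ^^^ y)) ≠ y.testBit (Nat.log 2 (x ^^^ y)) := by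
  have hd : x ^^^ y ≠ 0 := fun h0 => h (by simpa using h0)
  have := testBit_log_self hd
  rw [Nat.testBit_xor] at this
  intro he
  rw [he] at this
  simp at this

/-- There exist a positive-integer-valued function `q : ℕ → ℕ` and a positive integer `B`
such that `n ↦ q(⌊log n⌋ + 1)` is a super-polynomial (natural logarithm), and for every
positive integer `n` the opposite-Ramsey number satisfies `r((2n+1)², q(n)) ≤ B`: there is
a coloring of the 2-element subsets of a `q(n)`-element set with `(2n+1)²` colors
admitting no monochromatic set of `B+1` vertices.  In particular
`limsup_{n→∞} r((2n+1)², q(n)) < ∞`. -/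
theorem exists_superPolynomial_with_bounded_opposite_ramsey :
    ∃ (q : ℕ → ℕ) (B : ℕ), (∀ n : ℕ, 0 < q n) ∧ 0 < B ∧
      SuperPolynomial (fun n : ℕ => (q (⌊Real.log (n : ℝ)⌋₊ + 1) : ℝ)) ∧
      ∀ n : ℕ, 0 < n →
        ∃ Col : Sym2 (Fin (q n)) → Fin ((2 * n + 1) ^ 2),
          ∀ s : Finset (Fin (q n)), IsMonochromatic Col s → s.card ≤ B := by
  refine ⟨fun n => 2 ^ ((2 * n + 1) ^ 2), 2, fun n => Nat.pow_pos (by norm_num),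
    by norm_num, ?_, ?_⟩
  · -- super-polynomial growth
    intro g hg
    set d := g.natDegree with hd
    have hdeg : g.degree < (Polynomial.X ^ (d + 1) : Polynomial ℝ).degree := by
      rw [Polynomial.degree_X_pow]
      exact lt_of_le_of_lt Polynomial.degree_le_natDegree (by exact_mod_cast Nat.lt_succ_self d)
    have h1 : Tendsto (fun x : ℝ =>
        |Polynomial.eval x (Polynomial.X ^ (d + 1)) / Polynomial.eval x g|) atTop atTop :=
      Polynomial.abs_div_tendsto_atTop_of_degree_gt _ _ hdeg hg
    have h2 : Tendsto (fun n : ℕ =>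
        |Polynomial.eval (n : ℝ) (Polynomial.X ^ (d + 1)) / Polynomial.eval (n : ℝ) g|)
        atTop atTop := h1.comp tendsto_natCast_atTop_atTop
    apply tendsto_atTop_mono' atTop _ h2
    -- eventually ⌊log n⌋₊ ≥ d and n ≥ 1
    have hfl : Tendsto (fun n : ℕ => ⌊Real.log (n : ℝ)⌋₊) atTop atTop :=
      tendsto_nat_floor_atTop.comp (Real.tendsto_log_atTop.comp tendsto_natCast_atTop_atTop)
    filter_upwards [hfl.eventually_ge_atTop d, eventually_ge_atTop 1] with n hLd hn1
    set L := ⌊Real.log (n : ℝ)⌋₊ with hL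
    have hn0 : (0 : ℝ) < (n : ℝ) := by exact_mod_cast hn1
    -- key bound : (n:ℝ)^(d+1) ≤ 2^((2(L+1)+1)^2)
    have hlog : Real.log (n : ℝ) < (L : ℝ) + 1 := Nat.lt_floor_add_one _
    have hnle : (n : ℝ) ≤ (2 : ℝ) ^ (2 * (L + 1)) := by
      have h3 : (n : ℝ) ≤ Real.exp ((L : ℝ) + 1) := by
        rw [← Real.exp_log hn0]
        exact (Real.exp_le_exp.mpr hlog.le)
      have h4 : Real.exp ((L : ℝ) + 1) = Real.exp 1 ^ (L + 1) := by
        rw [← Real.exp_nat_mul]; push_cast; ring_nf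
      have h5 : Real.exp 1 ^ (L + 1) ≤ (4 : ℝ) ^ (L + 1) := by
        apply pow_le_pow_left₀ (Real.exp_pos 1).le
        linarith [Real.exp_one_lt_d9]
      calc (n : ℝ) ≤ Real.exp 1 ^ (L + 1) := by rw [← h4]; exact h3
        _ ≤ (4 : ℝ) ^ (L + 1) := h5
        _ = (2 : ℝ) ^ (2 * (L + 1)) := by
            rw [pow_mul]; norm_num
    have hkey : (n : ℝ) ^ (d + 1) ≤ (2 : ℝ) ^ ((2 * (L + 1) + 1) ^ 2) := by
      calc (n : ℝ) ^ (d + 1) ≤ ((2 : ℝ) ^ (2 * (L + 1))) ^ (d + 1) :=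
            pow_le_pow_left₀ hn0.le hnle _
        _ = (2 : ℝ) ^ (2 * (L + 1) * (d + 1)) := by rw [← pow_mul]
        _ ≤ (2 : ℝ) ^ ((2 * (L + 1) + 1) ^ 2) := by
            apply pow_le_pow_right₀ one_le_two
            nlinarith [hLd]
    have hq : ((2 ^ ((2 * (L + 1) + 1) ^ 2) : ℕ) : ℝ) = (2 : ℝ) ^ ((2 * (L + 1) + 1) ^ 2) := by
      push_cast; ring
    rw [abs_div]
    apply div_le_div_of_nonneg_right _ (abs_nonneg _)
    calc |Polynomial.eval (n : ℝ) (Polynomial.X ^ (d + 1))| = (n : ℝ) ^ (d + 1) := by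
          rw [Polynomial.eval_pow, Polynomial.eval_X, abs_pow, abs_of_nonneg hn0.le]
      _ ≤ (2 : ℝ) ^ ((2 * (L + 1) + 1) ^ 2) := hkey
      _ = ((2 ^ ((2 * (L + 1) + 1) ^ 2) : ℕ) : ℝ) := hq.symm
      _ ≤ |((2 ^ ((2 * (L + 1) + 1) ^ 2) : ℕ) : ℝ)| := le_abs_self _
  · -- the coloring
    intro n hn
    have ht : 0 < (2 * n + 1) ^ 2 := by positivity
    set t := (2 * n + 1) ^ 2 with htdef
    have hcol : ∀ x y : Fin (2 ^ t), Nat.log 2 (x.val ^^^ y.val) < t := by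
      intro x y
      rcases eq_or_ne (x.val ^^^ y.val) 0 with h0 | h0
      · rw [h0]; simpa using ht
      · exact Nat.log_lt_of_lt_pow h0 (Nat.xor_lt_two_pow x.isLt y.isLt)
    refine ⟨Sym2.lift ⟨fun x y => ⟨Nat.log 2 (x.val ^^^ y.val), hcol x y⟩, ?_⟩, ?_⟩
    · intro x y
      simp [Nat.xor_comm]
    · rintro s ⟨c, hc⟩
      by_contra hcard
      push_neg at hcard
      obtain ⟨a, ha, b, hb, e, he, hab, hae, hbe⟩ := Finset.two_lt_card.mp hcard
      have h1 := hc a ha b hb hab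
      have h2 := hc a ha e he hae
      have h3 := hc b hb e he hbe
      simp only [Sym2.lift_mk, Fin.mk.injEq] at h1 h2 h3
      have hab' : a.val ≠ b.val := fun h => hab (Fin.ext h)
      have hae' : a.val ≠ e.val := fun h => hae (Fin.ext h)
      have hbe' : b.val ≠ e.val := fun h => hbe (Fin.ext h)
      have t1 := testBit_ne_of_ne hab'
      have t2 := testBit_ne_of_ne hae'
      have t3 := testBit_ne_of_ne hbe'
      rw [Fin.ext_iff] at h1 h2 h3
      simp only [] at h1 h2 h3
      rw [h1] at t1; rw [h2] at t2; rw [h3] at t3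
      revert t1 t2 t3
      cases a.val.testBit c.val <;> cases b.val.testBit c.val <;>
        cases e.val.testBit c.val <;> simp
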